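/- There exists a constant c > 0 such that for each even n there is a nonclassical polynomial f : (ZMod 2)^n → ℝ/ℤ of degree at most log₂ n + 1, namely f(x) = A(∑|x_i| − n/2)/2^k mod 1 with A = ⌊a√n⌋ and 2^{k−1} < n ≤ 2^k for suitable constant a, satisfying |E_{x∈{0,1}^n}[(−1)^{MAJ(x)} e(f(x))]| ≥ c, where MAJ(x) = 0 if ∑|x_i| ≤ n/2 and 1 otherwise. -/

import Mathlib

open Finset

/-- Additive directional derivative `D_h f(x) = f(x+h) - f(x)`. -/
noncomputable def D {V M : Type*} [Add V] [AddCommGroup M] (h : V) (f : V → M) : V → M :=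
  fun x => f (x + h) - f x

/-- `f` is a nonclassical polynomial of degree at most `d`:
all `(d+1)`-fold iterated derivatives vanish identically. -/
def IsNCPoly {V M : Type*} [Add V] [AddCommGroup M] (d : ℕ) (f : V → M) : Prop :=
  ∀ hs : List V, hs.length = d + 1 → hs.foldr D f = 0

/-- `e(t) = exp(2πit)` on the torus `ℝ/ℤ`. -/
noncomputable def e : AddCircle (1 : ℝ) → ℂ :=
  Function.Periodic.lift (f := fun t : ℝ => Complex.exp (2 * (Real.pi : ℂ) * Complex.I * (t : ℂ)))
    (by
      intro t
      dsimp only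
      rw [Complex.ofReal_add, Complex.ofReal_one, mul_add, mul_one, Complex.exp_add,
        Complex.exp_two_pi_mul_I, mul_one])

lemma e_coe (r : ℝ) : e ((r : ℝ) : AddCircle (1:ℝ)) = Complex.exp (((2*Real.pi*r : ℝ) : ℂ) * Complex.I) := by
  unfold e
  show Complex.exp (2 * (Real.pi : ℂ) * Complex.I * (r : ℂ)) = _
  congr 1
  push_cast
  ring

-- ### nonclassical polynomial machinery

lemma zval_int : ∀ z w : ZMod 2, (((z+w).val : ℤ)) = (z.val : ℤ) + (w.val : ℤ) - 2*(z.val : ℤ)*(w.val : ℤ) := by decide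

lemma zval (z w : ZMod 2) : (((z+w).val : ℝ)) = (z.val : ℝ) + (w.val : ℝ) - 2*(z.val : ℝ)*(w.val : ℝ) := by
  exact_mod_cast congrArg (Int.cast : ℤ → ℝ) (zval_int z w)

lemma D_zero {V M : Type*} [Add V] [AddCommGroup M] (h : V) : D h (0 : V → M) = 0 := by
  funext x; simp [D]

def Good (n j : ℕ) (f : (Fin n → ZMod 2) → AddCircle (1:ℝ)) : Prop :=
  ∃ (c : ℝ) (t : Fin n → ℤ), ∀ x, f x =
    ((c + (∑ i, (t i : ℝ) * ((x i).val : ℝ)) / 2^j : ℝ) : AddCircle (1:ℝ))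

lemma good_D {n j : ℕ} {f} (hg : Good n (j+1) f) (h : Fin n → ZMod 2) : Good n j (D h f) := by
  obtain ⟨c, t, ht⟩ := hg
  refine ⟨(∑ i, (t i : ℝ) * ((h i).val : ℝ)) / 2^(j+1), fun i => -(t i * ((h i).val : ℤ)), fun x => ?_⟩
  show f (x + h) - f x = _
  rw [ht, ht, ← QuotientAddGroup.mk_sub]
  congr 1
  have expand : ∑ i, (t i:ℝ) * (((x+h) i).val:ℝ)
      = (∑ i, (t i:ℝ)*((x i).val:ℝ)) + (∑ i, (t i:ℝ)*((h i).val:ℝ))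
        - 2*∑ i, (t i:ℝ)*((h i).val:ℝ)*((x i).val:ℝ) := by
    rw [Finset.mul_sum, ← Finset.sum_add_distrib, ← Finset.sum_sub_distrib]
    apply Finset.sum_congr rfl; intro i _
    rw [show ((x+h) i) = x i + h i from rfl, zval]; ring
  have e2 : ∑ i, ((-(t i * ((h i).val:ℤ)) : ℤ):ℝ) * ((x i).val:ℝ)
      = -∑ i, (t i:ℝ)*((h i).val:ℝ)*((x i).val:ℝ) := by
    rw [← Finset.sum_neg_distrib]
    apply Finset.sum_congr rfl; intro i _; push_cast; ring
  rw [expand, e2]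
  have h2 : (2:ℝ)^(j+1) = 2^j * 2 := by ring
  have hp : (2:ℝ)^j ≠ 0 := by positivity
  field_simp [h2]
  ring

lemma good_zero {n : ℕ} {f} (hg : Good n 0 f) (h : Fin n → ZMod 2) : D h f = 0 := by
  obtain ⟨c, t, ht⟩ := hg
  have key : ∀ x, f x = ((c : ℝ) : AddCircle (1:ℝ)) := by
    intro x
    rw [ht x]
    have h1 : ((c + (∑ i, (t i : ℝ) * ((x i).val : ℝ)) / 2^0 : ℝ) : AddCircle (1:ℝ))
        = (c : AddCircle (1:ℝ)) + (((∑ i, (t i : ℝ) * ((x i).val : ℝ)) : ℝ) : AddCircle (1:ℝ)) := by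
      rw [← QuotientAddGroup.mk_add]; norm_num
    rw [h1]
    have h2 : (((∑ i, (t i : ℝ) * ((x i).val : ℝ)) : ℝ) : AddCircle (1:ℝ)) = 0 := by
      rw [AddCircle.coe_eq_zero_iff]
      refine ⟨∑ i, t i * ((x i).val : ℤ), ?_⟩
      push_cast
      simp [zsmul_eq_mul]
    rw [h2, add_zero]
  funext x
  show f (x + h) - f x = 0
  rw [key, key, sub_self]

lemma good_foldr {n : ℕ} : ∀ (hs : List (Fin n → ZMod 2)) (j : ℕ) (f), Good n (hs.length + j) f →
    Good n j (hs.foldr D f)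
  | [], j, f, hg => by simpa using hg
  | h :: hs, j, f, hg => by
    have : Good n (j+1) (hs.foldr D f) := good_foldr hs (j+1) f (by
      have : hs.length + (j + 1) = (h :: hs).length + j := by simp; omega
      rwa [this])
    exact good_D this h

lemma good_vanish {n : ℕ} : ∀ (hs : List (Fin n → ZMod 2)) (j : ℕ) (f), Good n j f →
    j + 1 ≤ hs.length → hs.foldr D f = 0
  | [], j, f, hg, hlen => by simp at hlen
  | h :: hs, j, f, hg, hlen => by
    show D h (hs.foldr D f) = 0
    rcases Nat.lt_or_ge j hs.length with hl | hl
    · rw [good_vanish hs j f hg hl, D_zero]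
    · have hj : j = hs.length := by simp at hlen; omega
      have : Good n 0 (hs.foldr D f) := good_foldr hs 0 f (by rw [Nat.add_zero, ← hj]; exact hg)
      exact good_zero this h

-- ### cube to binomial

noncomputable def cubeEquiv (n : ℕ) : (Fin n → ZMod 2) ≃ Finset (Fin n) where
  toFun x := univ.filter (fun i => x i = 1)
  invFun s := fun i => if i ∈ s then 1 else 0
  left_inv x := by
    funext i
    by_cases h : x i = 1
    · simp [h]
    · simp [h]
      have : ∀ z : ZMod 2, z ≠ 1 → z = 0 := by decide
      exact (this _ h).symm
  right_inv s := by
    ext i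
    simp

lemma cube_card (n : ℕ) (x : Fin n → ZMod 2) :
    ∑ i, (x i).val = (cubeEquiv n x).card := by
  show _ = (univ.filter fun i => x i = 1).card
  rw [Finset.card_filter]
  apply Finset.sum_congr rfl
  intro i _
  have : ∀ z : ZMod 2, z.val = if z = 1 then 1 else 0 := by decide
  rw [this]

lemma cube_sum (n : ℕ) (g : ℕ → ℂ) :
    ∑ x : Fin n → ZMod 2, g (∑ i, (x i).val)
      = ∑ s ∈ range (n+1), (n.choose s : ℂ) * g s := by
  rw [Fintype.sum_equiv (cubeEquiv n) _ (fun t => g t.card) (fun x => by rw [cube_card])]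
  rw [← Finset.powerset_univ, Finset.sum_powerset]
  simp only [Finset.card_univ, Fintype.card_fin]
  apply Finset.sum_congr rfl
  intro j hj
  rw [Finset.sum_congr rfl (fun t ht => by
    rw [(Finset.mem_powersetCard.mp ht).2]), Finset.sum_const, Finset.card_powersetCard,
    Finset.card_univ, Fintype.card_fin, nsmul_eq_mul]

-- ### symmetric folding

lemma fold_symm {M : Type*} [AddCommMonoid M] (F : ℕ → M) (m : ℕ) :
    ∑ j ∈ range (2*m+1), F j = (∑ j ∈ range m, (F j + F (2*m - j))) + F m := by
  have h1 : 2*m+1 = m + (m+1) := by omega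
  rw [h1, Finset.sum_range_add]
  have h2 : ∑ i ∈ range (m+1), F (m + i) = ∑ i ∈ range (m+1), F (2*m - i) := by
    have := Finset.sum_range_reflect (fun i => F (m + i)) (m+1)
    rw [← this]
    apply Finset.sum_congr rfl
    intro i hi
    simp at hi
    congr 1
    omega
  have h3 : 2*m - m = m := by omega
  rw [h2, Finset.sum_range_succ, h3, Finset.sum_add_distrib, add_assoc]

-- ### binomial identities

lemma choose_reflect_sum (n : ℕ) (G : ℕ → ℤ) :
    ∑ s ∈ range (n+1), (n.choose s : ℤ) * G s = ∑ s ∈ range (n+1), (n.choose s : ℤ) * G (n - s) := by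
  rw [← Finset.sum_range_reflect (fun s => (n.choose s : ℤ) * G (n - s)) (n+1)]
  apply Finset.sum_congr rfl
  intro s hs
  simp only [Finset.mem_range] at hs
  have h1 : n - (n - s) = s := by omega
  have h2 : n + 1 - 1 - s = n - s := by omega
  rw [h2, h1, Nat.choose_symm (by omega)]

lemma mean_id (n : ℕ) : ∑ s ∈ range (n+1), (n.choose s : ℤ) * (2*(s:ℤ) - n) = 0 := by
  have h := choose_reflect_sum n (fun s => 2*(s:ℤ) - n)
  have h2 : ∑ s ∈ range (n+1), (n.choose s : ℤ) * (2*((n - s : ℕ):ℤ) - n)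
      = ∑ s ∈ range (n+1), (n.choose s : ℤ) * (-(2*(s:ℤ) - n)) := by
    apply Finset.sum_congr rfl
    intro s hs
    simp only [Finset.mem_range] at hs
    have : ((n - s : ℕ) : ℤ) = (n : ℤ) - s := by omega
    rw [this]; ring_nf
  rw [h2] at h
  simp only [mul_neg, Finset.sum_neg_distrib] at h
  omega

lemma var_id (n : ℕ) : ∑ s ∈ range (n+1), (n.choose s : ℤ) * (2*(s:ℤ) - n)^2 = (n:ℤ) * 2^n := by
  induction n with
  | zero => simp
  | succ n ih =>
    have pascal : ∀ s, ((n+1).choose (s+1) : ℤ) = (n.choose s : ℤ) + (n.choose (s+1) : ℤ) := by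
      intro s; rw [Nat.choose_succ_succ]; push_cast; ring
    push_cast
    rw [Finset.sum_range_succ' (fun s => ((n+1).choose s : ℤ) * (2*(s:ℤ) - ((n:ℤ)+1))^2) (n+1)]
    simp only [pascal]
    have split : ∑ s ∈ range (n+1), ((n.choose s : ℤ) + (n.choose (s+1) : ℤ)) * (2*((s:ℤ)+1) - (n+1))^2
        = (∑ s ∈ range (n+1), (n.choose s : ℤ) * (2*(s:ℤ)+1 - n)^2)
          + ∑ s ∈ range (n+1), (n.choose (s+1) : ℤ) * (2*(s:ℤ)+1 - n)^2 := by
      rw [← Finset.sum_add_distrib]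
      apply Finset.sum_congr rfl
      intro s _
      push_cast
      ring
    have eA : ∑ s ∈ range (n+1), (n.choose s : ℤ) * (2*(s:ℤ)+1 - n)^2
        = (∑ s ∈ range (n+1), (n.choose s : ℤ) * (2*(s:ℤ) - n)^2)
          + 2 * (∑ s ∈ range (n+1), (n.choose s : ℤ) * (2*(s:ℤ) - n)) + 2^n := by
      have expand : ∀ s ∈ range (n+1), (n.choose s : ℤ) * (2*(s:ℤ)+1 - n)^2
          = (n.choose s : ℤ) * (2*(s:ℤ) - n)^2 + 2 * ((n.choose s : ℤ) * (2*(s:ℤ) - n)) + (n.choose s : ℤ) := by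
        intro s _; ring
      rw [Finset.sum_congr rfl expand]
      rw [Finset.sum_add_distrib, Finset.sum_add_distrib, ← Finset.mul_sum]
      have : ∑ s ∈ range (n+1), (n.choose s : ℤ) = 2^n := by
        exact_mod_cast congrArg (Nat.cast : ℕ → ℤ) (Nat.sum_range_choose n)
      rw [this]
    have eB : ∑ s ∈ range (n+1), (n.choose (s+1) : ℤ) * (2*(s:ℤ)+1 - n)^2
        = (∑ s ∈ range (n+1), (n.choose s : ℤ) * (2*(s:ℤ) - n)^2)
          - 2 * (∑ s ∈ range (n+1), (n.choose s : ℤ) * (2*(s:ℤ) - n)) + 2^n - (n+1)^2 := by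
      have shift : ∑ s ∈ range (n+2), (n.choose s : ℤ) * (2*(s:ℤ)-1 - n)^2
          = (∑ s ∈ range (n+1), (n.choose (s+1) : ℤ) * (2*((s:ℤ)+1)-1 - n)^2)
            + (n.choose 0 : ℤ) * (2*(0:ℤ)-1 - n)^2 := by
        rw [Finset.sum_range_succ' (fun s => (n.choose s : ℤ) * (2*(s:ℤ)-1 - n)^2) (n+1)]
        exact congrArg₂ (· + ·) (Finset.sum_congr rfl (fun s _ => by push_cast; ring)) (by push_cast; ring)
      have top : ∑ s ∈ range (n+2), (n.choose s : ℤ) * (2*(s:ℤ)-1 - n)^2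
          = ∑ s ∈ range (n+1), (n.choose s : ℤ) * (2*(s:ℤ)-1 - n)^2 := by
        rw [Finset.sum_range_succ]
        simp [Nat.choose_succ_self]
      have expand : ∀ s ∈ range (n+1), (n.choose s : ℤ) * (2*(s:ℤ)-1 - n)^2
          = (n.choose s : ℤ) * (2*(s:ℤ) - n)^2 - 2 * ((n.choose s : ℤ) * (2*(s:ℤ) - n)) + (n.choose s : ℤ) := by
        intro s _; ring
      have base : ∑ s ∈ range (n+1), (n.choose s : ℤ) * (2*(s:ℤ)-1 - n)^2
          = (∑ s ∈ range (n+1), (n.choose s : ℤ) * (2*(s:ℤ) - n)^2)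
            - 2 * (∑ s ∈ range (n+1), (n.choose s : ℤ) * (2*(s:ℤ) - n)) + 2^n := by
        rw [Finset.sum_congr rfl expand]
        rw [Finset.sum_add_distrib, Finset.sum_sub_distrib, ← Finset.mul_sum]
        have : ∑ s ∈ range (n+1), (n.choose s : ℤ) = 2^n := by
          exact_mod_cast congrArg (Nat.cast : ℕ → ℤ) (Nat.sum_range_choose n)
        rw [this]
      have eq1 : ∑ s ∈ range (n+1), (n.choose (s+1) : ℤ) * (2*((s:ℤ)+1)-1 - n)^2
          = ∑ s ∈ range (n+1), (n.choose (s+1) : ℤ) * (2*(s:ℤ)+1 - n)^2 := by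
        apply Finset.sum_congr rfl; intro s _; ring_nf
      rw [← eq1]
      have h := shift
      rw [top, base] at h
      simp only [Nat.choose_zero_right, Nat.cast_one] at h
      linarith [h]
    push_cast
    rw [split, eA, eB, mean_id n, ih]
    simp only [Nat.choose_zero_right, Nat.cast_one]
    push_cast
    ring

lemma sum_choose_real (n : ℕ) : ∑ s ∈ range (n+1), (n.choose s : ℝ) = 2^n := by
  exact_mod_cast congrArg (Nat.cast : ℕ → ℝ) (Nat.sum_range_choose n)

lemma var_id_real (n : ℕ) : ∑ s ∈ range (n+1), (n.choose s : ℝ) * (2*(s:ℝ) - n)^2 = (n:ℝ) * 2^n := by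
  have := congrArg (Int.cast : ℤ → ℝ) (var_id n)
  push_cast at this
  convert this using 2

-- ### central binomial bounds

lemma cb_up : ∀ m : ℕ, (2*m+1) * (Nat.centralBinom m)^2 ≤ 16^m := by
  intro m
  induction m with
  | zero => simp [Nat.centralBinom]
  | succ m ih =>
    have hrec := Nat.succ_mul_centralBinom_succ m
    have key : (m+1)^2 * ((2*(m+1)+1) * (Nat.centralBinom (m+1))^2) ≤ (m+1)^2 * 16^(m+1) := by
      have e1 : (m+1)^2 * ((2*(m+1)+1) * (Nat.centralBinom (m+1))^2)
          = (2*m+3) * ((m+1) * Nat.centralBinom (m+1))^2 := by ring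
      rw [e1, hrec]
      have e2 : (2*m+3) * (2 * (2*m+1) * Nat.centralBinom m)^2
          = 4*(2*m+3)*(2*m+1) * ((2*m+1) * (Nat.centralBinom m)^2) := by ring
      rw [e2]
      calc 4*(2*m+3)*(2*m+1) * ((2*m+1) * (Nat.centralBinom m)^2)
          ≤ 4*(2*m+3)*(2*m+1) * 16^m := by exact Nat.mul_le_mul_left _ ih
        _ ≤ (m+1)^2 * 16^(m+1) := by
            rw [pow_succ]
            have hc : 4*(2*m+3)*(2*m+1) ≤ (m+1)^2 * 16 := by nlinarith
            calc 4*(2*m+3)*(2*m+1) * 16^m ≤ ((m+1)^2*16) * 16^m := Nat.mul_le_mul_right _ hc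
              _ = (m+1)^2 * (16^m * 16) := by ring
    exact Nat.le_of_mul_le_mul_left key (by positivity)

lemma cb_low : ∀ m : ℕ, 4^m ≤ (2*m+1) * Nat.centralBinom m := by
  intro m
  induction m with
  | zero => simp [Nat.centralBinom]
  | succ m ih =>
    have hrec := Nat.succ_mul_centralBinom_succ m
    have key : (m+1) * 4^(m+1) ≤ (m+1) * ((2*(m+1)+1) * Nat.centralBinom (m+1)) := by
      have e1 : (m+1) * ((2*(m+1)+1) * Nat.centralBinom (m+1))
          = (2*m+3) * ((m+1) * Nat.centralBinom (m+1)) := by ring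
      rw [e1, hrec]
      calc (m+1) * 4^(m+1) = 4*(m+1) * 4^m := by ring
        _ ≤ (2*(2*m+3)) * 4^m := Nat.mul_le_mul_right _ (by omega)
        _ = 2 * ((2*m+3) * 4^m) := by ring
        _ ≤ 2 * ((2*m+3) * ((2*m+1) * Nat.centralBinom m)) := by
            exact Nat.mul_le_mul_left _ (Nat.mul_le_mul_left _ ih)
        _ = (2*m+3) * (2 * (2*m+1) * Nat.centralBinom m) := by ring
    exact Nat.le_of_mul_le_mul_left key (by positivity)

lemma cb_up_real (m : ℕ) : ((2*m).choose m : ℝ) ≤ 2^(2*m) / Real.sqrt (2*m+1) := by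
  have h := cb_up m
  have hs : Real.sqrt (2*m+1) > 0 := Real.sqrt_pos.mpr (by positivity)
  rw [← Nat.centralBinom_eq_two_mul_choose, le_div_iff₀ hs]
  have hsq : ((Nat.centralBinom m : ℝ) * Real.sqrt (2*m+1))^2 ≤ ((2:ℝ)^(2*m))^2 := by
    rw [mul_pow, Real.sq_sqrt (by positivity)]
    have h' : ((2*m+1) : ℝ) * (Nat.centralBinom m : ℝ)^2 ≤ 16^m := by exact_mod_cast h
    calc (Nat.centralBinom m : ℝ)^2 * ((2*(m:ℝ))+1) = ((2*m+1):ℝ) * (Nat.centralBinom m:ℝ)^2 := by push_cast; ring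
      _ ≤ 16^m := h'
      _ = ((2:ℝ)^(2*m))^2 := by rw [← pow_mul, show 2*m*2 = 4*m by ring, pow_mul]; norm_num
  have h1 : (0:ℝ) ≤ (Nat.centralBinom m : ℝ) * Real.sqrt (2*m+1) := by positivity
  have hY : (0:ℝ) ≤ 2^(2*m) := by positivity
  nlinarith [hsq, h1, hY]

lemma cb_low_real (m : ℕ) : (2^(2*m) : ℝ) / (2*m+1) ≤ ((2*m).choose m : ℝ) := by
  have h := cb_low m
  rw [div_le_iff₀ (by positivity), ← Nat.centralBinom_eq_two_mul_choose]
  have h' : ((4:ℝ))^m ≤ ((2*m+1) * Nat.centralBinom m : ℕ) := by exact_mod_cast h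
  push_cast at h'
  calc (2:ℝ)^(2*m) = 4^m := by rw [pow_mul]; norm_num
    _ ≤ ((2*m:ℝ)+1) * (Nat.centralBinom m : ℝ) := by linarith
    _ = (Nat.centralBinom m : ℝ) * ((2*m:ℝ)+1) := by ring

-- ### Chebyshev-type tail bound

lemma cheb (m : ℕ) (hm : 0 < m) (t : ℝ) (ht : 0 < t) (S : Finset ℕ) (hS : S ⊆ range (2*m+1))
    (hcond : ∀ j ∈ S, t * Real.sqrt (2*m) ≤ |2*(j:ℝ) - 2*m|) :
    ∑ j ∈ S, ((2*m).choose j : ℝ) ≤ 2^(2*m) / t^2 := by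
  have hn : (0:ℝ) < 2*m := by positivity
  have key : ∀ j ∈ S, t^2 * (2*m) * ((2*m).choose j : ℝ) ≤ ((2*m).choose j : ℝ) * (2*(j:ℝ) - 2*m)^2 := by
    intro j hj
    have h1 := hcond j hj
    have h2 : (t * Real.sqrt (2*m))^2 ≤ (2*(j:ℝ) - 2*m)^2 := by
      rw [← sq_abs (2*(j:ℝ) - 2*m)]
      apply sq_le_sq' <;> nlinarith [abs_nonneg (2*(j:ℝ) - 2*m), Real.sqrt_nonneg (2*(m:ℝ)), ht.le]
    rw [mul_pow, Real.sq_sqrt hn.le] at h2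
    have hc : (0:ℝ) ≤ ((2*m).choose j : ℝ) := by positivity
    nlinarith
  have sum1 : t^2 * (2*m) * ∑ j ∈ S, ((2*m).choose j : ℝ) ≤ ∑ j ∈ S, ((2*m).choose j : ℝ) * (2*(j:ℝ) - 2*m)^2 := by
    rw [Finset.mul_sum]
    exact Finset.sum_le_sum key
  have sum2 : ∑ j ∈ S, ((2*m).choose j : ℝ) * (2*(j:ℝ) - 2*m)^2
      ≤ ∑ j ∈ range (2*m+1), ((2*m).choose j : ℝ) * (2*(j:ℝ) - 2*m)^2 := by
    apply Finset.sum_le_sum_of_subset_of_nonneg hS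
    intro j _ _
    positivity
  have hvar : ∑ j ∈ range (2*m+1), ((2*m).choose j : ℝ) * (2*(j:ℝ) - 2*m)^2 = (2*m : ℝ) * 2^(2*m) := by
    have := var_id_real (2*m)
    push_cast at this ⊢
    convert this using 2
  rw [hvar] at sum2
  have ht2 : (0:ℝ) < t^2 := by positivity
  rw [le_div_iff₀ ht2]
  nlinarith [sum1, sum2, hn]

-- ### the good and bad index sets

def Pset (m : ℕ) : ℕ → Prop := fun j => Real.sqrt (2*m)/8 ≤ (m:ℝ) - j ∧ (m:ℝ) - j ≤ 5*Real.sqrt (2*m)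

def Rset (m : ℕ) : ℕ → Prop := fun j => 10*Real.sqrt (2*m) < (m:ℝ) - j

open Classical in
lemma Sall_eq (m : ℕ) : 2 * (∑ j ∈ range m, ((2*m).choose j : ℝ)) + ((2*m).choose m : ℝ)
    = 2^(2*m) := by
  have h1 := fold_symm (fun s => ((2*m).choose s : ℝ)) m
  have h2 : ∑ s ∈ range (2*m+1), ((2*m).choose s : ℝ) = 2^(2*m) := sum_choose_real (2*m)
  have h3 : ∀ j ∈ range m, (((2*m).choose j : ℝ) + ((2*m).choose (2*m - j) : ℝ))
      = 2 * ((2*m).choose j : ℝ) := by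
    intro j hj
    simp only [Finset.mem_range] at hj
    rw [Nat.choose_symm (by omega : j ≤ 2*m)]
    ring
  rw [h2, Finset.sum_congr rfl h3, ← Finset.mul_sum] at h1
  linarith [h1]

lemma Cm_le (m : ℕ) (h400 : (400:ℝ) ≤ 2*(m:ℝ)) : ((2*m).choose m : ℝ) ≤ 2^(2*m)/20 := by
  have h := cb_up_real m
  have hsq : (20:ℝ) ≤ Real.sqrt (2*(m:ℝ)+1) := by
    rw [show (20:ℝ) = Real.sqrt 400 by
      rw [show (400:ℝ) = 20^2 by norm_num, Real.sqrt_sq (by norm_num)]]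
    apply Real.sqrt_le_sqrt
    linarith
  have h2 : (2:ℝ)^(2*m)/Real.sqrt (2*(m:ℝ)+1) ≤ 2^(2*m)/20 :=
    div_le_div_of_nonneg_left (by positivity) (by norm_num) hsq
  exact le_trans h h2

open Classical in
lemma S1_bound (m : ℕ) (h400 : (400:ℝ) ≤ 2*(m:ℝ)) :
    ∑ j ∈ (range m).filter (fun (j:ℕ) => (m:ℝ) - j < Real.sqrt (2*m)/8), ((2*m).choose j : ℝ)
      ≤ 2^(2*m)/8 := by
  have hsqnn : (0:ℝ) ≤ Real.sqrt (2*m) := Real.sqrt_nonneg _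
  set b := ⌊Real.sqrt (2*(m:ℝ))/8⌋₊ with hb
  have hsub : (range m).filter (fun (j:ℕ) => (m:ℝ) - j < Real.sqrt (2*m)/8) ⊆ Ico (m - b) m := by
    intro j hj
    simp only [Finset.mem_filter, Finset.mem_range] at hj
    obtain ⟨hjm, hjv⟩ := hj
    simp only [Finset.mem_Ico]
    refine ⟨?_, hjm⟩
    have hle : ((m - j : ℕ):ℝ) ≤ Real.sqrt (2*(m:ℝ))/8 := by
      rw [Nat.cast_sub (le_of_lt hjm)]
      linarith
    have := Nat.le_floor hle
    omega
  have hmid : ∀ j ∈ Ico (m-b) m, ((2*m).choose j : ℝ) ≤ ((2*m).choose m : ℝ) := by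
    intro j _
    have h1 := Nat.choose_le_middle j (2*m)
    have h2 : (2*m)/2 = m := by omega
    rw [h2] at h1
    exact_mod_cast h1
  have step1 : ∑ j ∈ (range m).filter (fun (j:ℕ) => (m:ℝ) - j < Real.sqrt (2*m)/8), ((2*m).choose j : ℝ)
      ≤ ∑ j ∈ Ico (m-b) m, ((2*m).choose j : ℝ) :=
    Finset.sum_le_sum_of_subset_of_nonneg hsub (by intros; positivity)
  have step2 : ∑ j ∈ Ico (m-b) m, ((2*m).choose j : ℝ) ≤ ((Ico (m-b) m).card : ℝ) * ((2*m).choose m : ℝ) := by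
    have := Finset.sum_le_card_nsmul (Ico (m-b) m) _ _ hmid
    rwa [nsmul_eq_mul] at this
  have step3 : ((Ico (m-b) m).card : ℝ) ≤ (b:ℝ) := by
    rw [Nat.card_Ico]
    exact_mod_cast Nat.cast_le.mpr (by omega : m - (m - b) ≤ b)
  have step4 : ((2*m).choose m : ℝ) ≤ 2^(2*m)/Real.sqrt (2*(m:ℝ)+1) := cb_up_real m
  have hble : (b:ℝ) ≤ Real.sqrt (2*(m:ℝ))/8 := Nat.floor_le (by positivity)
  have hCnn : (0:ℝ) ≤ ((2*m).choose m : ℝ) := by positivity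
  have hsle : Real.sqrt (2*(m:ℝ)) ≤ Real.sqrt (2*(m:ℝ)+1) := Real.sqrt_le_sqrt (by linarith)
  have hspos : (0:ℝ) < Real.sqrt (2*(m:ℝ)+1) := by
    apply Real.sqrt_pos.mpr
    linarith
  have hX : (0:ℝ) < 2^(2*m) := by positivity
  have step5 : (b:ℝ) * ((2*m).choose m : ℝ) ≤ (Real.sqrt (2*(m:ℝ))/8) * (2^(2*m)/Real.sqrt (2*(m:ℝ)+1)) := by
    apply mul_le_mul hble step4 hCnn (by positivity)
  have step6 : (Real.sqrt (2*(m:ℝ))/8) * (2^(2*m)/Real.sqrt (2*(m:ℝ)+1)) ≤ 2^(2*m)/8 := by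
    rw [div_mul_div_comm, div_le_div_iff₀ (by positivity) (by norm_num)]
    nlinarith [hsle, hX, hsqnn]
  have hcard : ((Ico (m-b) m).card : ℝ) * ((2*m).choose m : ℝ) ≤ (b:ℝ) * ((2*m).choose m : ℝ) :=
    mul_le_mul_of_nonneg_right step3 hCnn
  linarith

open Classical in
lemma tail_bound (m : ℕ) (hm : 0 < m) (t : ℝ) (ht : 0 < t) :
    ∑ j ∈ (range m).filter (fun (j:ℕ) => t*Real.sqrt (2*m)/2 < (m:ℝ) - j), ((2*m).choose j : ℝ)
      ≤ 2^(2*m)/t^2 := by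
  apply cheb m hm t ht
  · exact (Finset.filter_subset _ _).trans (by intro j hj; simp only [Finset.mem_range] at *; omega)
  · intro j hj
    simp only [Finset.mem_filter, Finset.mem_range] at hj
    obtain ⟨hjm, hjv⟩ := hj
    have hneg : 2*(j:ℝ) - 2*m ≤ 0 := by
      have : (j:ℝ) ≤ m := by exact_mod_cast hjm.le
      linarith
    rw [abs_of_nonpos hneg]
    linarith

open Classical in
lemma SG_lower (m : ℕ) (hm : 0 < m) (h400 : (400:ℝ) ≤ 2*(m:ℝ)) :
    (17/50 : ℝ) * 2^(2*m) ≤ ∑ j ∈ (range m).filter (Pset m), ((2*m).choose j : ℝ) := by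
  have hS1 := S1_bound m h400
  have hS2 : ∑ j ∈ (range m).filter (fun (j:ℕ) => 5*Real.sqrt (2*m) < (m:ℝ) - j), ((2*m).choose j : ℝ)
      ≤ 2^(2*m)/100 := by
    have h := tail_bound m hm 10 (by norm_num)
    have he : ∀ j : ℕ, ((10:ℝ)*Real.sqrt (2*m)/2 < (m:ℝ) - j) = (5*Real.sqrt (2*m) < (m:ℝ) - j) := by
      intro j
      congr 1
      ring
    simp only [he] at h
    calc _ ≤ (2:ℝ)^(2*m)/10^2 := h
      _ = 2^(2*m)/100 := by norm_num
  have hsplit := Finset.sum_filter_add_sum_filter_not (range m) (Pset m)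
    (fun j => ((2*m).choose j : ℝ))
  have hnot : ∑ j ∈ (range m).filter (fun j => ¬ Pset m j), ((2*m).choose j:ℝ)
      ≤ (∑ j ∈ (range m).filter (fun (j:ℕ) => (m:ℝ) - j < Real.sqrt (2*m)/8), ((2*m).choose j : ℝ))
        + ∑ j ∈ (range m).filter (fun (j:ℕ) => 5*Real.sqrt (2*m) < (m:ℝ) - j), ((2*m).choose j : ℝ) := by
    rw [Finset.sum_filter, Finset.sum_filter, Finset.sum_filter, ← Finset.sum_add_distrib]
    apply Finset.sum_le_sum
    intro j hj
    have hCn : (0:ℝ) ≤ ((2*m).choose j : ℝ) := by positivity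
    have t1 : (0:ℝ) ≤ (if (m:ℝ) - j < Real.sqrt (2*m)/8 then ((2*m).choose j : ℝ) else 0) := by
      split_ifs <;> simp [hCn]
    have t2 : (0:ℝ) ≤ (if 5*Real.sqrt (2*m) < (m:ℝ) - j then ((2*m).choose j : ℝ) else 0) := by
      split_ifs <;> simp [hCn]
    by_cases h1 : Pset m j
    · rw [if_neg (fun hc => hc h1)]
      linarith
    · rw [if_pos h1]
      have h1' : ¬ (Real.sqrt (2*(m:ℝ))/8 ≤ (m:ℝ) - j ∧ (m:ℝ) - j ≤ 5*Real.sqrt (2*(m:ℝ))) := by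
        simpa [Pset] using h1
      push_neg at h1'
      by_cases hc1 : (m:ℝ) - j < Real.sqrt (2*m)/8
      · rw [if_pos hc1]
        linarith
      · push_neg at hc1
        have hc2 : 5*Real.sqrt (2*(m:ℝ)) < (m:ℝ) - j := h1' (by exact_mod_cast hc1)
        rw [if_neg (not_lt.mpr hc1), if_pos (by exact_mod_cast hc2)]
        linarith
  have hall := Sall_eq m
  have hCm := Cm_le m h400
  have hpow : (0:ℝ) < 2^(2*m) := by positivity
  linarith [hsplit, hnot, hS1, hS2, hall, hCm]

open Classical in
lemma Q_lower (m : ℕ) (hm : 0 < m) (h400 : (400:ℝ) ≤ 2*(m:ℝ)) (φ s0 : ℝ)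
    (hs0lb : (49/5000:ℝ) ≤ s0) (hs0ub : s0 ≤ 1)
    (hang1 : ∀ j ∈ range m, Pset m j → s0 ≤ Real.sin (φ * ((m:ℝ) - j)))
    (hang2 : ∀ j ∈ range m, ¬ Rset m j → 0 ≤ Real.sin (φ * ((m:ℝ) - j))) :
    (2:ℝ)^(2*m) * (1/2000) ≤ ∑ j ∈ range m, ((2*m).choose j : ℝ) * Real.sin (φ * ((m:ℝ) - j)) := by
  have key : ∀ j ∈ range m,
      s0 * (if Pset m j then ((2*m).choose j : ℝ) else 0)
        - (if Rset m j then ((2*m).choose j : ℝ) else 0)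
      ≤ ((2*m).choose j : ℝ) * Real.sin (φ * ((m:ℝ) - j)) := by
    intro j hj
    have hCn : (0:ℝ) ≤ ((2*m).choose j : ℝ) := by positivity
    by_cases hPj : Pset m j
    · rw [if_pos hPj]
      have hsin := hang1 j hj hPj
      have hRj : ¬ Rset m j := by
        simp only [Rset, Pset] at hPj ⊢
        push_neg
        have hs := Real.sqrt_nonneg (2*(m:ℝ))
        obtain ⟨h1, h2⟩ := hPj
        nlinarith
      rw [if_neg hRj]
      nlinarith [mul_le_mul_of_nonneg_left hsin hCn]
    · rw [if_neg hPj]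
      by_cases hRj : Rset m j
      · rw [if_pos hRj]
        have := Real.neg_one_le_sin (φ * ((m:ℝ) - j))
        nlinarith [mul_le_mul_of_nonneg_left this hCn]
      · rw [if_neg hRj]
        have hsin := hang2 j hj hRj
        nlinarith [mul_nonneg hCn hsin]
  have hsum : s0 * (∑ j ∈ (range m).filter (Pset m), ((2*m).choose j : ℝ))
      - (∑ j ∈ (range m).filter (Rset m), ((2*m).choose j : ℝ))
      ≤ ∑ j ∈ range m, ((2*m).choose j : ℝ) * Real.sin (φ * ((m:ℝ) - j)) := by
    rw [Finset.sum_filter, Finset.sum_filter, Finset.mul_sum, ← Finset.sum_sub_distrib]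
    exact Finset.sum_le_sum key
  have hSG := SG_lower m hm h400
  have hSGnn : (0:ℝ) ≤ ∑ j ∈ (range m).filter (Pset m), ((2*m).choose j : ℝ) := by
    apply Finset.sum_nonneg
    intros
    positivity
  have hSB : ∑ j ∈ (range m).filter (Rset m), ((2*m).choose j : ℝ) ≤ 2^(2*m)/400 := by
    have h := tail_bound m hm 20 (by norm_num)
    have he : ∀ j : ℕ, ((20:ℝ)*Real.sqrt (2*m)/2 < (m:ℝ) - j) = Rset m j := by
      intro j
      simp only [Rset]
      congr 1
      ring
    simp only [he] at h
    calc _ ≤ (2:ℝ)^(2*m)/20^2 := h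
      _ = 2^(2*m)/400 := by norm_num
  have hpow : (0:ℝ) < 2^(2*m) := by positivity
  have h1 : (49/5000 : ℝ) * ((17/50) * 2^(2*m)) ≤ s0 * (∑ j ∈ (range m).filter (Pset m), ((2*m).choose j : ℝ)) := by
    calc (49/5000 : ℝ) * ((17/50) * 2^(2*m))
        ≤ (49/5000) * (∑ j ∈ (range m).filter (Pset m), ((2*m).choose j : ℝ)) := by
          apply mul_le_mul_of_nonneg_left hSG (by norm_num)
      _ ≤ s0 * (∑ j ∈ (range m).filter (Pset m), ((2*m).choose j : ℝ)) :=
          mul_le_mul_of_nonneg_right hs0lb hSGnn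
  linarith [hsum, hSB, h1]


set_option maxHeartbeats 2000000 in
/-- There is a nonclassical polynomial of degree `≤ log₂ n + 1`, of the form
`A(∑|x_i| - n/2)/2^k mod 1` with `A = ⌊a√n⌋` and `2^{k-1} < n ≤ 2^k`, having
constant correlation with the majority function. -/
theorem stmt10 : ∃ c : ℝ, 0 < c ∧ ∃ a : ℝ, 0 < a ∧
    ∀ n : ℕ, Even n → 0 < n →
    ∃ k : ℕ, 2 ^ (k - 1) < n ∧ n ≤ 2 ^ k ∧
      ∀ f : (Fin n → ZMod 2) → AddCircle (1 : ℝ),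
        (∀ x, f x =
          ((((⌊a * Real.sqrt n⌋ : ℝ) * ((∑ i, ((x i).val : ℝ)) - (n : ℝ) / 2)) / 2 ^ k : ℝ)
            : AddCircle (1 : ℝ))) →
        IsNCPoly (Nat.log 2 n + 1) f ∧
        c ≤ ‖
          ((∑ x : Fin n → ZMod 2,
              (if 2 * ∑ i, (x i).val ≤ n then (1 : ℂ) else -1) * e (f x)) / 2 ^ n)‖ := by
  classical
  refine ⟨1/1000, by norm_num, 1/20, by norm_num, ?_⟩
  intro n hEven hpos
  have hn2 : 2 ≤ n := by
    rcases hEven with ⟨m, hm⟩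
    omega
  refine ⟨Nat.clog 2 n, Nat.pow_pred_clog_lt_self (by norm_num) hn2,
    Nat.le_pow_clog (by norm_num) n, ?_⟩
  intro f hf
  set k := Nat.clog 2 n with hkdef
  have hk2 : n ≤ 2^k := Nat.le_pow_clog (by norm_num) n
  have hk1 : 2^(k-1) < n := Nat.pow_pred_clog_lt_self (by norm_num) hn2
  set A : ℤ := ⌊(1/20 : ℝ) * Real.sqrt n⌋ with hAdef
  -- f is a good (nonclassical) polynomial
  have hGood : Good n k f := by
    refine ⟨-((A:ℝ) * n) / 2^(k+1), fun _ => A, fun x => ?_⟩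
    rw [hf x]
    congr 1
    rw [← Finset.mul_sum]
    have h2 : (2:ℝ)^(k+1) = 2^k * 2 := by ring
    have hp : (2:ℝ)^k ≠ 0 := by positivity
    field_simp [h2]
    ring
  have hlog : k ≤ Nat.log 2 n + 1 := by
    have h1 : k - 1 ≤ Nat.log 2 n :=
      (Nat.le_log_iff_pow_le (by norm_num) (by omega)).mpr (le_of_lt hk1)
    omega
  constructor
  · intro hs hlen
    exact good_vanish hs k f hGood (by omega)
  · -- correlation bound
    obtain ⟨m, hmm⟩ := hEven
    have hm2 : n = 2*m := by omega
    have hmpos : 0 < m := by omega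
    -- basic real facts
    have hApos : (0:ℤ) ≤ A := Int.floor_nonneg.mpr (by positivity)
    have hAle : (A:ℝ) ≤ Real.sqrt n / 20 := by
      have := Int.floor_le ((1/20 : ℝ) * Real.sqrt n)
      rw [← hAdef] at this
      linarith
    have hAgt : Real.sqrt n / 20 - 1 < (A:ℝ) := by
      have := Int.sub_one_lt_floor ((1/20:ℝ) * Real.sqrt n)
      rw [← hAdef] at this
      linarith
    have h2k_ge : (n:ℝ) ≤ 2^k := by exact_mod_cast hk2
    have h2k_le : (2:ℝ)^k ≤ 2*n := by
      have hkpos : 1 ≤ k := by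
        by_contra hcon
        push_neg at hcon
        interval_cases k
        simp at hk2
        omega
      have hnat : (2:ℕ)^k ≤ 2*n := by
        have : (2:ℕ)^k = 2 * 2^(k-1) := by
          rw [← pow_succ']
          congr 1
          omega
        omega
      exact_mod_cast hnat
    have h2kpos : (0:ℝ) < 2^k := by positivity
    have hnpos : (0:ℝ) < n := by exact_mod_cast hpos
    -- angle and complex setup
    set θ : ℕ → ℝ := fun s => 2*Real.pi*(((A:ℝ) * ((s:ℝ) - (n:ℝ)/2))/2^k) with hθ
    set g : ℕ → ℂ := fun s => (if 2*s ≤ n then (1:ℂ) else -1) * Complex.exp (((θ s : ℝ):ℂ) * Complex.I) with hg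
    have hT : (∑ x : Fin n → ZMod 2, (if 2 * ∑ i, (x i).val ≤ n then (1:ℂ) else -1) * e (f x))
        = ∑ s ∈ range (n+1), (n.choose s : ℂ) * g s := by
      rw [← cube_sum n g]
      apply Fintype.sum_congr
      intro x
      congr 1
      rw [hf x, e_coe]
      congr 1
      simp only [hθ]
      push_cast
      ring
    rw [hT]
    set T := ∑ s ∈ range (n+1), (n.choose s : ℂ) * g s with hTdef
    have term_re : ∀ s, ((n.choose s : ℂ) * g s).re
        = (n.choose s : ℝ) * ((if 2*s ≤ n then (1:ℝ) else -1) * Real.cos (θ s)) := by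
      intro s
      by_cases h : 2*s ≤ n <;>
        simp [hg, h, Complex.exp_ofReal_mul_I_re, Complex.exp_ofReal_mul_I_im,
          Complex.mul_re, Complex.mul_im]
    have term_im : ∀ s, ((n.choose s : ℂ) * g s).im
        = (n.choose s : ℝ) * ((if 2*s ≤ n then (1:ℝ) else -1) * Real.sin (θ s)) := by
      intro s
      by_cases h : 2*s ≤ n <;>
        simp [hg, h, Complex.exp_ofReal_mul_I_re, Complex.exp_ofReal_mul_I_im,
          Complex.mul_re, Complex.mul_im]
    have hnn : (n:ℝ) = 2*m := by exact_mod_cast congrArg (Nat.cast : ℕ → ℝ) hm2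
    have hθm : θ m = 0 := by
      rw [hθ]
      simp only []
      rw [hnn]
      ring
    -- real part
    have hre : T.re = (n.choose m : ℝ) := by
      rw [hTdef, Complex.re_sum, Finset.sum_congr rfl (fun s _ => term_re s), hm2]
      rw [fold_symm (fun s => ((2*m).choose s : ℝ) * ((if 2*s ≤ 2*m then (1:ℝ) else -1) * Real.cos (θ s))) m]
      have hpair : ∀ j ∈ range m,
          (((2*m).choose j : ℝ) * ((if 2*j ≤ 2*m then (1:ℝ) else -1) * Real.cos (θ j))
          + ((2*m).choose (2*m - j) : ℝ) * ((if 2*(2*m - j) ≤ 2*m then (1:ℝ) else -1) * Real.cos (θ (2*m - j)))) = 0 := by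
        intro j hj
        simp only [Finset.mem_range] at hj
        have h1 : 2*j ≤ 2*m := by omega
        have h2 : ¬(2*(2*m - j) ≤ 2*m) := by omega
        have hch : (2*m).choose (2*m - j) = (2*m).choose j := Nat.choose_symm (by omega)
        have hθr : θ (2*m - j) = -θ j := by
          rw [hθ]
          simp only []
          have hc : ((2*m - j : ℕ) : ℝ) = 2*(m:ℝ) - j := by
            push_cast [Nat.cast_sub (by omega : j ≤ 2*m)]
            ring
          rw [hc, hnn]
          ring
        rw [if_pos h1, if_neg h2, hch, hθr, Real.cos_neg]
        ring
      rw [Finset.sum_congr rfl hpair, Finset.sum_const_zero, zero_add]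
      rw [if_pos (le_refl (2*m)), hθm, Real.cos_zero]
      ring
    -- imaginary part
    set φ : ℝ := 2*Real.pi*(A:ℝ)/2^k with hφ
    have hθj : ∀ j : ℕ, θ j = -(φ * ((m:ℝ) - j)) := by
      intro j
      rw [hθ, hφ]
      simp only []
      rw [hnn]
      ring
    set Q : ℝ := ∑ j ∈ range m, ((2*m).choose j : ℝ) * Real.sin (φ * ((m:ℝ) - j)) with hQdef
    have him : T.im = -(2*Q) := by
      rw [hTdef, Complex.im_sum, Finset.sum_congr rfl (fun s _ => term_im s), hm2]
      rw [fold_symm (fun s => ((2*m).choose s : ℝ) * ((if 2*s ≤ 2*m then (1:ℝ) else -1) * Real.sin (θ s))) m]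
      have hpair : ∀ j ∈ range m,
          (((2*m).choose j : ℝ) * ((if 2*j ≤ 2*m then (1:ℝ) else -1) * Real.sin (θ j))
          + ((2*m).choose (2*m - j) : ℝ) * ((if 2*(2*m - j) ≤ 2*m then (1:ℝ) else -1) * Real.sin (θ (2*m - j))))
          = -(2 * (((2*m).choose j : ℝ) * Real.sin (φ * ((m:ℝ) - j)))) := by
        intro j hj
        simp only [Finset.mem_range] at hj
        have h1 : 2*j ≤ 2*m := by omega
        have h2 : ¬(2*(2*m - j) ≤ 2*m) := by omega
        have hch : (2*m).choose (2*m - j) = (2*m).choose j := Nat.choose_symm (by omega)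
        have hθr : θ (2*m - j) = -θ j := by
          rw [hθ]
          simp only []
          have hc : ((2*m - j : ℕ) : ℝ) = 2*(m:ℝ) - j := by
            push_cast [Nat.cast_sub (by omega : j ≤ 2*m)]
            ring
          rw [hc, hnn]
          ring
        rw [if_pos h1, if_neg h2, hch, hθr, Real.sin_neg, hθj j, Real.sin_neg]
        ring
      rw [Finset.sum_congr rfl hpair, if_pos (le_refl (2*m)), hθm, Real.sin_zero]
      rw [hQdef, Finset.mul_sum, ← Finset.sum_neg_distrib]
      ring_nf
    -- |T| lower bounds via re and im
    have habsT : ‖T / 2^n‖ = ‖T‖ / 2^n := by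
      rw [norm_div]
      congr 1
      rw [norm_pow]
      simp
    rcases eq_or_lt_of_le hApos with hA0 | hA1
    · -- A = 0 : use real part
      have hre2 : (n.choose m : ℝ) ≤ ‖T‖ := by
        calc (n.choose m : ℝ) = T.re := hre.symm
          _ ≤ |T.re| := le_abs_self _
          _ ≤ ‖T‖ := Complex.abs_re_le_norm T
      have hn400 : (n:ℝ) < 400 := by
        have hfl : (1/20:ℝ) * Real.sqrt n < 1 := by
          by_contra hcon
          push_neg at hcon
          have : (1:ℤ) ≤ A := by
            rw [hAdef]
            exact Int.le_floor.mpr (by exact_mod_cast hcon)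
          omega
        have hs : Real.sqrt n < 20 := by linarith
        nlinarith [Real.sq_sqrt hnpos.le, Real.sqrt_nonneg (n:ℝ)]
      have hcb : (2:ℝ)^n / ((n:ℝ)+1) ≤ (n.choose m : ℝ) := by
        have h := cb_low_real m
        rw [← hm2] at h
        have h2 : (2:ℝ)^n / ((n:ℝ)+1) ≤ (2:ℝ)^n / (2*(m:ℝ)+1) := by
          gcongr
          rw [hnn]
        linarith
      rw [habsT, le_div_iff₀ (by positivity : (0:ℝ) < 2^n)]
      have h2n : (0:ℝ) < 2^n := by positivity
      calc (1/1000 : ℝ) * 2^n ≤ (1/(n+1)) * 2^n := by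
            apply mul_le_mul_of_nonneg_right _ h2n.le
            rw [div_le_div_iff₀ (by norm_num) (by positivity)]
            linarith
        _ = 2^n / (n+1) := by ring
        _ ≤ (n.choose m : ℝ) := hcb
        _ ≤ ‖T‖ := hre2
    · -- A ≥ 1 : use imaginary part
      have hA1' : (1:ℝ) ≤ (A:ℝ) := by exact_mod_cast hA1
      have hsqnn : (0:ℝ) ≤ Real.sqrt n := Real.sqrt_nonneg _
      have hsqsq : Real.sqrt n ^ 2 = (n:ℝ) := Real.sq_sqrt hnpos.le
      have hsq20 : (20:ℝ) ≤ Real.sqrt n := by linarith [hAle]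
      have hn400 : (400:ℝ) ≤ n := by nlinarith
      have hA40 : Real.sqrt n / 40 ≤ (A:ℝ) := by
        rcases le_total (Real.sqrt n) 40 with h | h
        · linarith
        · linarith
      have hAnn : (0:ℝ) ≤ (A:ℝ) := by linarith
      have hφpos : 0 ≤ φ := by
        rw [hφ]
        have := Real.pi_pos
        positivity
      have hpi_lo := Real.pi_gt_d6
      have hpi_hi := Real.pi_lt_d2
      have hs0 : (49/5000 : ℝ) ≤ Real.sin (Real.pi/320) := by
        have h0 : (0:ℝ) < Real.pi/320 := by linarith
        have h1 : Real.pi/320 ≤ 1 := by linarith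
        have h2 := Real.sin_gt_sub_cube h0
        have h3 : Real.pi/320 ≤ 0.00985 := by linarith
        have h4 : (Real.pi/320)^3 ≤ (0.00985:ℝ)^3 := pow_le_pow_left₀ h0.le h3 3
        have h5 : ((0.00985:ℝ))^3 ≤ 0.000000956 := by norm_num
        linarith [h2, h4, h5, hpi_lo]
      have hsqrt2m : Real.sqrt (2*(m:ℝ)) = Real.sqrt n := by rw [← hnn]
      have h400' : (400:ℝ) ≤ 2*(m:ℝ) := by rw [← hnn]; exact hn400
      have hφmul : ∀ v : ℝ, φ * v = 2*Real.pi*((A:ℝ)*v)/2^k := by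
        intro v; rw [hφ]; ring
      have hang1 : ∀ j ∈ range m, Pset m j →
          Real.sin (Real.pi/320) ≤ Real.sin (φ * ((m:ℝ) - j)) := by
        intro j hj hPj
        simp only [Pset] at hPj
        obtain ⟨hp1, hp2⟩ := hPj
        rw [hsqrt2m] at hp1 hp2
        have hvnn : (0:ℝ) ≤ (m:ℝ) - j := le_trans (by positivity) hp1
        have hAv1 : (A:ℝ) * ((m:ℝ) - j) ≤ (n:ℝ)/4 := by
          calc (A:ℝ) * ((m:ℝ) - j) ≤ (Real.sqrt n/20) * ((m:ℝ) - j) :=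
                mul_le_mul_of_nonneg_right hAle hvnn
            _ ≤ (Real.sqrt n/20) * (5*Real.sqrt n) :=
                mul_le_mul_of_nonneg_left hp2 (by positivity)
            _ = (n:ℝ)/4 := by nlinarith [hsqsq]
        have hupper : φ * ((m:ℝ) - j) ≤ Real.pi/2 := by
          rw [hφmul, div_le_iff₀ h2kpos]
          nlinarith [mul_nonneg Real.pi_pos.le (sub_nonneg.mpr hAv1),
            mul_nonneg Real.pi_pos.le (sub_nonneg.mpr h2k_ge), Real.pi_pos]
        have hAv2 : (n:ℝ)/320 ≤ (A:ℝ) * ((m:ℝ) - j) := by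
          calc (n:ℝ)/320 = (Real.sqrt n/40) * (Real.sqrt n/8) := by nlinarith [hsqsq]
            _ ≤ (Real.sqrt n/40) * ((m:ℝ) - j) :=
                mul_le_mul_of_nonneg_left hp1 (by positivity)
            _ ≤ (A:ℝ) * ((m:ℝ) - j) := mul_le_mul_of_nonneg_right hA40 hvnn
        have hlower : Real.pi/320 ≤ φ * ((m:ℝ) - j) := by
          rw [hφmul, le_div_iff₀ h2kpos]
          nlinarith [mul_nonneg Real.pi_pos.le (sub_nonneg.mpr hAv2),
            mul_nonneg Real.pi_pos.le (sub_nonneg.mpr h2k_le), Real.pi_pos, hnpos]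
        have hmem1 : Real.pi/320 ∈ Set.Icc (-(Real.pi/2)) (Real.pi/2) :=
          ⟨by linarith, by linarith⟩
        have hmem2 : φ*((m:ℝ) - j) ∈ Set.Icc (-(Real.pi/2)) (Real.pi/2) :=
          ⟨by linarith, hupper⟩
        exact Real.strictMonoOn_sin.monotoneOn hmem1 hmem2 hlower
      have hang2 : ∀ j ∈ range m, ¬ Rset m j → 0 ≤ Real.sin (φ * ((m:ℝ) - j)) := by
        intro j hj hRj
        simp only [Finset.mem_range] at hj
        simp only [Rset] at hRj
        push_neg at hRj
        rw [hsqrt2m] at hRj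
        have hvnn : (0:ℝ) ≤ (m:ℝ) - j := by
          have : (j:ℝ) + 1 ≤ m := by exact_mod_cast hj
          linarith
        have h0 : 0 ≤ φ*((m:ℝ) - j) := mul_nonneg hφpos hvnn
        have hAv3 : (A:ℝ)*((m:ℝ) - j) ≤ (n:ℝ)/2 := by
          calc (A:ℝ) * ((m:ℝ) - j) ≤ (Real.sqrt n/20) * ((m:ℝ) - j) :=
                mul_le_mul_of_nonneg_right hAle hvnn
            _ ≤ (Real.sqrt n/20) * (10*Real.sqrt n) :=
                mul_le_mul_of_nonneg_left hRj (by positivity)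
            _ = (n:ℝ)/2 := by nlinarith [hsqsq]
        have hπb : φ*((m:ℝ) - j) ≤ Real.pi := by
          rw [hφmul, div_le_iff₀ h2kpos]
          nlinarith [mul_nonneg Real.pi_pos.le (sub_nonneg.mpr hAv3),
            mul_nonneg Real.pi_pos.le (sub_nonneg.mpr h2k_ge), Real.pi_pos]
        exact Real.sin_nonneg_of_nonneg_of_le_pi h0 hπb
      have hQge : (2:ℝ)^(2*m) * (1/2000) ≤ Q := by
        rw [hQdef]
        exact Q_lower m hmpos h400' φ (Real.sin (Real.pi/320)) hs0 (Real.sin_le_one _) hang1 hang2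
      have hpow2m : (0:ℝ) < 2^(2*m) := by positivity
      have hQnn : (0:ℝ) ≤ Q := by nlinarith [hQge, hpow2m]
      rw [habsT, le_div_iff₀ (by positivity : (0:ℝ) < 2^n)]
      have himabs : 2*Q ≤ ‖T‖ := by
        have h1 : |T.im| ≤ ‖T‖ := Complex.abs_im_le_norm T
        rw [him, abs_neg, abs_of_nonneg (by linarith : (0:ℝ) ≤ 2*Q)] at h1
        exact h1
      have h2n2m : (2:ℝ)^n = 2^(2*m) := by rw [hm2]
      rw [h2n2m]
      linarith [himabs, hQge]
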